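/- Let F : [0, ∞) → (0, ∞)^I be a solution of the discrete exact-resonance acoustic kinetic system with strictly positive values, and let ρ = I / (∑_{k=1}^{I} k·F_k(0)). Then the solution converges exponentially fast to the equilibrium F*_k = 1/(ρk): there exist constants C₁, C₂ > 0 such that max_{k∈{1,…,I}} |F_k(t) − 1/(ρk)| ≤ C₁·e^{−C₂ t} for all t ≥ 0. -/

import Mathlib

open scoped BigOperators Classical

/-- Right-hand side of the discrete exact-resonance acoustic kinetic system on one ray:
for `k₁ ∈ {1,…,I}` and kernel `V_{k₁,k₂,k₃} = μ k₁ k₂ k₃`,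
`Q_{k₁}[F] = ∑_{k₂+k₃=k₁} V (F_{k₂}F_{k₃} − F_{k₁}(F_{k₂}+F_{k₃}))
  − 2 ∑_{k₁+k₂=k₃} V (F_{k₁}F_{k₂} − F_{k₃}(F_{k₁}+F_{k₂}))`. -/
noncomputable def Qd (I : ℕ) (μ : ℝ) (F : ℕ → ℝ) (k1 : ℕ) : ℝ :=
  (∑ k2 ∈ Finset.Icc 1 I, ∑ k3 ∈ Finset.Icc 1 I,
      if k2 + k3 = k1 then μ * k1 * k2 * k3 * (F k2 * F k3 - F k1 * (F k2 + F k3)) else 0)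
  - 2 * ∑ k2 ∈ Finset.Icc 1 I, ∑ k3 ∈ Finset.Icc 1 I,
      if k1 + k2 = k3 then μ * k3 * k1 * k2 * (F k1 * F k2 - F k3 * (F k1 + F k2)) else 0

lemma triple_collapse (s : Finset ℕ) (g : ℕ → ℕ → ℝ) :
    ∑ k ∈ s, ∑ b ∈ s, ∑ c ∈ s, (if b + c = k then g b c else 0)
    = ∑ b ∈ s, ∑ c ∈ s, (if b + c ∈ s then g b c else 0) := by
  rw [Finset.sum_comm]
  refine Finset.sum_congr rfl fun b _ => ?_
  rw [Finset.sum_comm]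
  refine Finset.sum_congr rfl fun c _ => ?_
  exact Finset.sum_ite_eq s (b + c) (fun _ => g b c)

lemma weak_form (I : ℕ) (μ : ℝ) (F ψ : ℕ → ℝ) :
    ∑ k ∈ Finset.Icc 1 I, ψ k * Qd I μ F k
    = ∑ b ∈ Finset.Icc 1 I, ∑ c ∈ Finset.Icc 1 I,
        (if b + c ≤ I then
          μ * (b+c : ℕ) * b * c * (F b * F c - F (b+c) * (F b + F c)) * (ψ (b+c) - ψ b - ψ c)
        else 0) := by
  classical
  set s := Finset.Icc 1 I with hs
  have hmem : ∀ b ∈ s, ∀ c ∈ s, ((b + c ∈ s) ↔ (b + c ≤ I)) := by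
    intro b hb c hc
    simp only [hs, Finset.mem_Icc] at *
    omega
  have h1 : ∑ k ∈ s, ψ k *
        (∑ b ∈ s, ∑ c ∈ s,
          if b + c = k then μ * k * b * c * (F b * F c - F k * (F b + F c)) else 0)
      = ∑ b ∈ s, ∑ c ∈ s,
        (if b + c ∈ s then
          ψ (b+c) * (μ * (b+c : ℕ) * b * c * (F b * F c - F (b+c) * (F b + F c)))
        else 0) := by
    rw [← triple_collapse]
    refine Finset.sum_congr rfl fun k _ => ?_
    rw [Finset.mul_sum]
    refine Finset.sum_congr rfl fun b _ => ?_
    rw [Finset.mul_sum]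
    refine Finset.sum_congr rfl fun c _ => ?_
    split_ifs with h
    · subst h; ring
    · exact mul_zero _
  have h2 : ∑ k ∈ s, ψ k *
        (∑ b ∈ s, ∑ c ∈ s,
          if k + b = c then μ * c * k * b * (F k * F b - F c * (F k + F b)) else 0)
      = ∑ b ∈ s, ∑ c ∈ s,
        (if b + c ∈ s then
          ψ b * (μ * (b+c : ℕ) * b * c * (F b * F c - F (b+c) * (F b + F c)))
        else 0) := by
    refine Finset.sum_congr rfl fun b _ => ?_
    rw [Finset.mul_sum]
    refine Finset.sum_congr rfl fun c _ => ?_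
    rw [Finset.mul_sum]
    have : ∀ x ∈ s, ψ b * (if b + c = x then μ * x * b * c * (F b * F c - F x * (F b + F c)) else 0)
        = (if b + c = x then ψ b * (μ * (b+c : ℕ) * b * c * (F b * F c - F (b+c) * (F b + F c))) else 0) := by
      intro x _
      split_ifs with h
      · subst h; ring
      · exact mul_zero _
    rw [Finset.sum_congr rfl this, Finset.sum_ite_eq s (b+c) _]
  have hsym : ∑ b ∈ s, ∑ c ∈ s,
        (if b + c ∈ s then
          ψ b * (μ * (b+c : ℕ) * b * c * (F b * F c - F (b+c) * (F b + F c)))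
        else 0)
      = ∑ b ∈ s, ∑ c ∈ s,
        (if b + c ∈ s then
          ψ c * (μ * (b+c : ℕ) * b * c * (F b * F c - F (b+c) * (F b + F c)))
        else 0) := by
    rw [Finset.sum_comm]
    refine Finset.sum_congr rfl fun b _ => Finset.sum_congr rfl fun c _ => ?_
    rw [Nat.add_comm c b]
    split_ifs with h
    · ring
    · rfl
  calc ∑ k ∈ s, ψ k * Qd I μ F k
      = ∑ k ∈ s, (ψ k * (∑ b ∈ s, ∑ c ∈ s,
          if b + c = k then μ * k * b * c * (F b * F c - F k * (F b + F c)) else 0)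
        - 2 * (ψ k * (∑ b ∈ s, ∑ c ∈ s,
          if k + b = c then μ * c * k * b * (F k * F b - F c * (F k + F b)) else 0))) := by
        refine Finset.sum_congr rfl fun k _ => ?_
        unfold Qd
        rw [← hs]; ring
    _ = ∑ b ∈ s, ∑ c ∈ s,
        (if b + c ∈ s then
          (μ * (b+c : ℕ) * b * c * (F b * F c - F (b+c) * (F b + F c))) * (ψ (b+c) - ψ b - ψ c)
        else 0) := by
        rw [Finset.sum_sub_distrib, ← Finset.mul_sum, h1, h2]
        rw [two_mul]
        nth_rewrite 2 [hsym]
        rw [sub_add_eq_sub_sub, ← Finset.sum_sub_distrib, ← Finset.sum_sub_distrib]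
        refine Finset.sum_congr rfl fun b _ => ?_
        rw [← Finset.sum_sub_distrib, ← Finset.sum_sub_distrib]
        refine Finset.sum_congr rfl fun c _ => ?_
        split_ifs with h
        · ring
        · ring
    _ = _ := by
        refine Finset.sum_congr rfl fun b hb => Finset.sum_congr rfl fun c hc => ?_
        exact if_congr (hmem b hb c hc) rfl rfl

lemma mass_Q (I : ℕ) (μ : ℝ) (F : ℕ → ℝ) :
    ∑ k ∈ Finset.Icc 1 I, (k : ℝ) * Qd I μ F k = 0 := by
  rw [weak_form I μ F (fun k => (k : ℝ))]
  refine Finset.sum_eq_zero fun b _ => Finset.sum_eq_zero fun c _ => ?_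
  split_ifs with h
  · push_cast; ring
  · rfl

lemma entropy_Q (I : ℕ) (μ : ℝ) (F : ℕ → ℝ) (hF : ∀ k ∈ Finset.Icc 1 I, 0 < F k) :
    ∑ k ∈ Finset.Icc 1 I, (F k)⁻¹ * Qd I μ F k
    = ∑ b ∈ Finset.Icc 1 I, ∑ c ∈ Finset.Icc 1 I,
        (if b + c ≤ I then
          μ * (b+c : ℕ) * b * c * (F b * F c * F (b+c)) *
            ((F (b+c))⁻¹ - (F b)⁻¹ - (F c)⁻¹)^2
        else 0) := by
  rw [weak_form I μ F (fun k => (F k)⁻¹)]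
  refine Finset.sum_congr rfl fun b hb => Finset.sum_congr rfl fun c hc => ?_
  split_ifs with h
  · have hb1 : (1:ℕ) ≤ b := (Finset.mem_Icc.mp hb).1
    have hc1 : (1:ℕ) ≤ c := (Finset.mem_Icc.mp hc).1
    have hfb := hF b hb
    have hfc := hF c hc
    have hfbc := hF (b+c) (Finset.mem_Icc.mpr ⟨by omega, h⟩)
    field_simp
    ring
  · rfl

lemma theta_upper {x : ℝ} (hx : 0 < x) : x * (x - 1 - Real.log x) ≤ (x-1)^2 := by
  have h1 : Real.log x⁻¹ ≤ x⁻¹ - 1 := Real.log_le_sub_one_of_pos (inv_pos.mpr hx)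
  rw [Real.log_inv] at h1
  have h2 : x * (-Real.log x) ≤ x * (x⁻¹ - 1) := by
    apply mul_le_mul_of_nonneg_left h1 hx.le
  have h3 : x * x⁻¹ = 1 := mul_inv_cancel₀ hx.ne'
  nlinarith

lemma theta_lower {x B : ℝ} (hx : 0 < x) (hxB : x ≤ B) (hB : 1 ≤ B) :
    (x-1)^2 ≤ 4*B^2*(x - 1 - Real.log x) := by
  set s := Real.sqrt x with hsdef
  have hs0 : 0 ≤ s := Real.sqrt_nonneg x
  have hs2 : s^2 = x := Real.sq_sqrt hx.le
  have hlog : Real.log x = 2 * Real.log s := by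
    rw [hsdef, Real.log_sqrt hx.le]; ring
  have hls : Real.log s ≤ s - 1 := by
    have hspos : 0 < s := Real.sqrt_pos.mpr hx
    exact Real.log_le_sub_one_of_pos hspos
  have hsB : s ≤ B := by
    have : x ≤ B^2 := by nlinarith
    calc s = Real.sqrt x := rfl
      _ ≤ Real.sqrt (B^2) := Real.sqrt_le_sqrt this
      _ = B := by rw [Real.sqrt_sq (by linarith)]
  have key : x - 1 - Real.log x ≥ (s-1)^2 := by
    rw [hlog]; nlinarith
  have h4 : (s+1)^2 ≤ 4*B^2 := by nlinarith
  have h5 : (x-1)^2 = (s-1)^2*(s+1)^2 := by rw [← hs2]; ring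
  have h6 : (s-1)^2*(s+1)^2 ≤ (s-1)^2*(4*B^2) :=
    mul_le_mul_of_nonneg_left h4 (sq_nonneg (s-1))
  have h7 : 0 ≤ B^2 := sq_nonneg B
  nlinarith [key, h5, h6]

lemma theta_nonneg {x : ℝ} (hx : 0 < x) : 0 ≤ x - 1 - Real.log x := by
  have := Real.log_le_sub_one_of_pos hx; linarith

lemma telescope (F : ℕ → ℝ) (n : ℕ) :
    (F (n+1))⁻¹ - (n+1 : ℝ) * (F 1)⁻¹
    = ∑ c ∈ Finset.Icc 1 n, ((F (c+1))⁻¹ - (F c)⁻¹ - (F 1)⁻¹) := by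
  induction n with
  | zero => simp
  | succ n ih =>
    rw [Finset.sum_Icc_succ_top (by omega : 1 ≤ n + 1), ← ih]
    push_cast; ring

lemma coercive (I : ℕ) (hI : 0 < I) (F : ℕ → ℝ) (ε M : ℝ) (hε : 0 < ε)
    (hb : ∀ k ∈ Finset.Icc 1 I, ε ≤ (k:ℝ) * F k ∧ (k:ℝ) * F k ≤ M) :
    ∑ k ∈ Finset.Icc 1 I,
        ((k:ℝ) * F k - (∑ l ∈ Finset.Icc 1 I, (l:ℝ) * F l)/I)^2
    ≤ M^4 * I^2 * ∑ c ∈ Finset.Icc 1 (I-1),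
        ((F (c+1))⁻¹ - (F c)⁻¹ - (F 1)⁻¹)^2 := by
  classical
  set K := Finset.Icc 1 I with hK
  set m : ℝ := ∑ l ∈ K, (l:ℝ) * F l with hm
  set cb : ℝ := m / I with hcb
  set S : ℝ := ∑ c ∈ Finset.Icc 1 (I-1), ((F (c+1))⁻¹ - (F c)⁻¹ - (F 1)⁻¹)^2 with hS
  have hIcast : (0:ℝ) < I := by exact_mod_cast hI
  have h1mem : (1:ℕ) ∈ K := by simp [hK, Finset.mem_Icc]; omega
  have hF1 : ε ≤ F 1 ∧ F 1 ≤ M := by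
    have := hb 1 h1mem; simpa using this
  have hMpos : 0 < M := lt_of_lt_of_le hε (le_trans hF1.1 hF1.2)
  have hFpos : ∀ k ∈ K, 0 < F k := by
    intro k hk
    have hk1 : (1:ℕ) ≤ k := (Finset.mem_Icc.mp hk).1
    have hkpos : (0:ℝ) < k := by exact_mod_cast hk1
    have h := (hb k hk).1
    nlinarith [mul_pos hkpos (lt_of_lt_of_le hε h)]
  have hSnn : 0 ≤ S := Finset.sum_nonneg fun c _ => sq_nonneg _
  -- Step B : per-k bound against S
  have stepB : ∀ k ∈ K, ((k:ℝ) * F k - F 1)^2 ≤ M^4 * I * S := by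
    intro k hk
    have hk1 : (1:ℕ) ≤ k := (Finset.mem_Icc.mp hk).1
    have hkI : k ≤ I := (Finset.mem_Icc.mp hk).2
    have hkpos : (0:ℝ) < k := by exact_mod_cast hk1
    have hFk := hFpos k hk
    have hF1pos := hFpos 1 h1mem
    set δ : ℝ := (F k)⁻¹ - (k:ℝ) * (F 1)⁻¹ with hδ
    have key : (((k:ℝ) * F k - F 1) * k)^2 = δ^2 * (F 1 * ((k:ℝ) * F k))^2 := by
      have : ((k:ℝ) * F k - F 1) * k = -(δ * (F 1 * ((k:ℝ) * F k))) := by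
        rw [hδ]; field_simp; ring
      rw [this]; ring
    have hsq1 : ((k:ℝ) * F k - F 1)^2 ≤ (((k:ℝ) * F k - F 1) * k)^2 := by
      have hk1' : (1:ℝ) ≤ k := by exact_mod_cast hk1
      have h1 : (1:ℝ) ≤ (k:ℝ)^2 := by nlinarith
      have := mul_le_mul_of_nonneg_left h1 (sq_nonneg ((k:ℝ) * F k - F 1))
      calc ((k:ℝ) * F k - F 1)^2 = ((k:ℝ) * F k - F 1)^2 * 1 := by ring
        _ ≤ ((k:ℝ) * F k - F 1)^2 * ((k:ℝ)^2) := this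
        _ = (((k:ℝ) * F k - F 1) * k)^2 := by ring
    have hprod : (F 1 * ((k:ℝ) * F k))^2 ≤ M^4 := by
      have h1 := hF1.1; have h2 := hF1.2
      have h3 := (hb k hk).1; have h4 := (hb k hk).2
      have hu : (0:ℝ) < (k:ℝ) * F k := mul_pos hkpos hFk
      have hmul : F 1 * ((k:ℝ) * F k) ≤ M * M :=
        mul_le_mul h2 h4 hu.le hMpos.le
      have hmulnn : 0 ≤ F 1 * ((k:ℝ) * F k) := by positivity
      nlinarith
    -- telescope and Cauchy-Schwarz
    have htel : δ = ∑ c ∈ Finset.Icc 1 (k-1), ((F (c+1))⁻¹ - (F c)⁻¹ - (F 1)⁻¹) := by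
      have hrw : k = (k-1)+1 := by omega
      rw [hδ, hrw]
      simp only [Nat.add_sub_cancel]
      push_cast
      exact telescope F (k-1)
    have hCS : δ^2 ≤ (I : ℝ) * S := by
      rw [htel]
      calc (∑ c ∈ Finset.Icc 1 (k-1), ((F (c+1))⁻¹ - (F c)⁻¹ - (F 1)⁻¹))^2
          ≤ (Finset.Icc 1 (k-1)).card * ∑ c ∈ Finset.Icc 1 (k-1), ((F (c+1))⁻¹ - (F c)⁻¹ - (F 1)⁻¹)^2 :=
            sq_sum_le_card_mul_sum_sq
        _ ≤ (I:ℝ) * S := by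
            apply mul_le_mul
            · rw [Nat.card_Icc]
              have : k - 1 + 1 - 1 ≤ I := by omega
              exact_mod_cast this
            · rw [hS]
              apply Finset.sum_le_sum_of_subset_of_nonneg
              · apply Finset.Icc_subset_Icc le_rfl; omega
              · intro c _ _; exact sq_nonneg _
            · exact Finset.sum_nonneg fun c _ => sq_nonneg _
            · exact hIcast.le
    calc ((k:ℝ) * F k - F 1)^2 ≤ (((k:ℝ) * F k - F 1) * k)^2 := hsq1
      _ = δ^2 * (F 1 * ((k:ℝ) * F k))^2 := key
      _ ≤ δ^2 * M^4 := mul_le_mul_of_nonneg_left hprod (sq_nonneg _)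
      _ ≤ ((I:ℝ) * S) * M^4 := mul_le_mul_of_nonneg_right hCS (by positivity)
      _ = M^4 * I * S := by ring
  -- Step A : variance vs deviation from u_1
  have hsum_m : ∑ k ∈ K, (k:ℝ) * F k = (I:ℝ) * cb := by
    rw [hcb, ← hm]; field_simp
  have hcard : (K.card : ℝ) = I := by
    have h : I + 1 - 1 = I := by omega
    rw [hK, Nat.card_Icc, h]
  have stepA : ∑ k ∈ K, ((k:ℝ) * F k - cb)^2 ≤ ∑ k ∈ K, ((k:ℝ) * F k - F 1)^2 := by
    have hexp : ∀ k : ℕ, ((k:ℝ) * F k - cb)^2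
        = ((k:ℝ) * F k - F 1)^2 - ((cb - F 1)*(2*((k:ℝ) * F k)) - (cb - F 1)*(F 1 + cb)) := by
      intro k; ring
    rw [Finset.sum_congr rfl fun k _ => hexp k, Finset.sum_sub_distrib,
        Finset.sum_sub_distrib, ← Finset.mul_sum, ← Finset.mul_sum, hsum_m,
        Finset.sum_const, nsmul_eq_mul, hcard]
    nlinarith [sq_nonneg (cb - F 1), hIcast]
  calc ∑ k ∈ K, ((k:ℝ) * F k - cb)^2
      ≤ ∑ k ∈ K, ((k:ℝ) * F k - F 1)^2 := stepA
    _ ≤ ∑ _k ∈ K, M^4 * I * S := Finset.sum_le_sum stepB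
    _ = (K.card : ℝ) * (M^4 * I * S) := by rw [Finset.sum_const, nsmul_eq_mul]
    _ = M^4 * I^2 * S := by rw [hcard]; ring

lemma theta_term_bound {u cb ε : ℝ} (hcb : 0 < cb) (hε : 0 < ε) (hεu : ε ≤ u) :
    u/cb - 1 - Real.log (u/cb) ≤ (u - cb)^2/(cb*ε) := by
  have hu : 0 < u := lt_of_lt_of_le hε hεu
  have hx : 0 < u/cb := div_pos hu hcb
  have h1 := theta_upper hx
  rw [le_div_iff₀ (by positivity : (0:ℝ) < cb*ε)]
  have h2 : (u/cb - 1 - Real.log (u/cb)) * (cb*ε) ≤ (u/cb - 1 - Real.log (u/cb)) * (cb*u) :=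
    mul_le_mul_of_nonneg_left (mul_le_mul_of_nonneg_left hεu hcb.le) (theta_nonneg hx)
  have h6 := mul_le_mul_of_nonneg_right h1 (sq_nonneg cb)
  have h7 : (u/cb) * (u/cb - 1 - Real.log (u/cb)) * cb^2
      = (u/cb - 1 - Real.log (u/cb)) * (cb*u) := by
    field_simp
  have h5 : (u/cb - 1)^2 * cb^2 = (u - cb)^2 := by
    field_simp
  linarith

lemma comb_identity (x y z S : ℝ) (hy : y ≠ 0) (hz : z ≠ 0) :
    (x*z/y) * (y*S/z) = x*S := by
  field_simp

set_option maxHeartbeats 1600000 in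
/-- Exponential convergence to equilibrium for the discrete exact-resonance acoustic
kinetic system: with `ρ = I / ∑_k k F_k(0)`, every positive solution satisfies
`max_k |F_k(t) − 1/(ρk)| ≤ C₁ e^{−C₂ t}`. -/
theorem exponential_convergence_exact_resonance (I : ℕ) (hI : 0 < I) (μ : ℝ) (hμ : 0 < μ)
    (F : ℝ → ℕ → ℝ)
    (hsol : ∀ k ∈ Finset.Icc 1 I, ∀ t : ℝ, 0 ≤ t →
      HasDerivAt (fun s => F s k) (Qd I μ (F t) k) t)
    (hpos : ∀ k ∈ Finset.Icc 1 I, ∀ t : ℝ, 0 ≤ t → 0 < F t k)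
    (ρ : ℝ) (hρ : ρ = (I : ℝ) / ∑ k ∈ Finset.Icc 1 I, (k : ℝ) * F 0 k) :
    ∃ C1 C2 : ℝ, 0 < C1 ∧ 0 < C2 ∧
      ∀ t : ℝ, 0 ≤ t → ∀ k ∈ Finset.Icc 1 I,
        |F t k - 1 / (ρ * k)| ≤ C1 * Real.exp (-C2 * t) := by
  classical
  set K := Finset.Icc 1 I with hK
  have h1K : (1:ℕ) ∈ K := by simp only [hK, Finset.mem_Icc]; omega
  have hIcast : (0:ℝ) < I := by exact_mod_cast hI
  have hkpos : ∀ k ∈ K, (0:ℝ) < k := by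
    intro k hk
    have : (1:ℕ) ≤ k := (Finset.mem_Icc.mp hk).1
    exact_mod_cast this
  obtain ⟨m, hm⟩ : ∃ x : ℝ, x = ∑ k ∈ K, (k:ℝ) * F 0 k := ⟨_, rfl⟩
  have hmpos : 0 < m := by
    rw [hm]
    exact Finset.sum_pos (fun k hk => mul_pos (hkpos k hk) (hpos k hk 0 le_rfl)) ⟨1, h1K⟩
  obtain ⟨cb, hcb⟩ : ∃ x : ℝ, x = m / I := ⟨_, rfl⟩
  have hcbpos : 0 < cb := hcb ▸ div_pos hmpos hIcast
  -- mass conservation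
  have humass : ∀ t : ℝ, 0 ≤ t → HasDerivAt (fun s => ∑ k ∈ K, (k:ℝ) * F s k) 0 t := by
    intro t ht
    have h := HasDerivAt.fun_sum (fun k hk => (hsol k hk t ht).const_mul ((k:ℝ)))
    rw [mass_Q I μ (F t)] at h
    exact h
  have hmass_const : ∀ t : ℝ, 0 ≤ t → ∑ k ∈ K, (k:ℝ) * F t k = m := by
    intro t ht
    rw [hm]
    have hcont : ContinuousOn (fun s => ∑ k ∈ K, (k:ℝ) * F s k) (Set.Icc 0 t) :=
      fun x hx => ((humass x hx.1).continuousAt).continuousWithinAt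
    have hderiv : ∀ x ∈ Set.Ico 0 t,
        HasDerivWithinAt (fun s => ∑ k ∈ K, (k:ℝ) * F s k) 0 (Set.Ici x) x :=
      fun x hx => (humass x hx.1).hasDerivWithinAt
    exact constant_of_has_deriv_right_zero hcont hderiv t ⟨ht, le_rfl⟩
  -- positivity of u
  have hupos : ∀ t : ℝ, 0 ≤ t → ∀ k ∈ K, 0 < (k:ℝ) * F t k :=
    fun t ht k hk => mul_pos (hkpos k hk) (hpos k hk t ht)
  -- entropy and dissipation
  obtain ⟨g, hgdef⟩ : ∃ g : ℝ → ℝ,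
      g = fun t => I * Real.log cb - ∑ k ∈ K, Real.log ((k:ℝ) * F t k) := ⟨_, rfl⟩
  obtain ⟨D, hDdef⟩ : ∃ D : ℝ → ℝ,
      D = fun t => ∑ k ∈ K, (F t k)⁻¹ * Qd I μ (F t) k := ⟨_, rfl⟩
  have hg' : ∀ t : ℝ, 0 ≤ t → HasDerivAt g (-(D t)) t := by
    intro t ht
    have hsum : HasDerivAt (fun s => ∑ k ∈ K, Real.log ((k:ℝ) * F s k))
        (∑ k ∈ K, ((k:ℝ) * Qd I μ (F t) k) / ((k:ℝ) * F t k)) t :=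
      HasDerivAt.fun_sum fun k hk =>
        ((hsol k hk t ht).const_mul ((k:ℝ))).log (ne_of_gt (hupos t ht k hk))
    have heq : (∑ k ∈ K, ((k:ℝ) * Qd I μ (F t) k) / ((k:ℝ) * F t k))
        = ∑ k ∈ K, (F t k)⁻¹ * Qd I μ (F t) k := by
      refine Finset.sum_congr rfl fun k hk => ?_
      have hk0 : (k:ℝ) ≠ 0 := (hkpos k hk).ne'
      rw [mul_div_mul_left _ _ hk0, div_eq_inv_mul]
    rw [heq] at hsum
    have hfinal := hsum.const_sub ((I:ℝ) * Real.log cb)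
    rw [hgdef, hDdef]
    simpa using hfinal
  have hDrepr : ∀ t : ℝ, 0 ≤ t → D t
      = ∑ b ∈ K, ∑ c ∈ K,
        (if b + c ≤ I then
          μ * (b+c : ℕ) * b * c * (F t b * F t c * F t (b+c)) *
            ((F t (b+c))⁻¹ - (F t b)⁻¹ - (F t c)⁻¹)^2
        else 0) := fun t ht => by
    rw [hDdef]
    exact entropy_Q I μ (F t) (fun k hk => hpos k hk t ht)
  have hDnn : ∀ t : ℝ, 0 ≤ t → 0 ≤ D t := by
    intro t ht
    rw [hDrepr t ht]
    refine Finset.sum_nonneg fun b hb => Finset.sum_nonneg fun c hc => ?_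
    split_ifs with h
    · have hb1 : (1:ℕ) ≤ b := (Finset.mem_Icc.mp hb).1
      have hc1 : (1:ℕ) ≤ c := (Finset.mem_Icc.mp hc).1
      have hfb := hpos b hb t ht
      have hfc := hpos c hc t ht
      have hfbc := hpos (b+c) (by rw [hK]; simp only [Finset.mem_Icc]; omega) t ht
      have h1 : (0:ℝ) ≤ μ * (b+c : ℕ) * b * c := by positivity
      positivity
    · exact le_rfl
  -- g is antitone  on [0, ∞)
  have hganti : AntitoneOn g (Set.Ici 0) := by
    apply antitoneOn_of_deriv_nonpos (convex_Ici 0)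
    · exact fun x hx => ((hg' x hx).continuousAt).continuousWithinAt
    · intro x hx
      rw [interior_Ici] at hx
      exact (hg' x (le_of_lt hx)).differentiableAt.differentiableWithinAt
    · intro x hx
      rw [interior_Ici] at hx
      rw [(hg' x (le_of_lt hx)).deriv]
      exact neg_nonpos.mpr (hDnn x (le_of_lt hx))
  obtain ⟨G0, hG0⟩ : ∃ x : ℝ, x = g 0 := ⟨_, rfl⟩
  have hgle : ∀ t : ℝ, 0 ≤ t → g t ≤ G0 :=
    fun t ht => hG0 ▸ hganti (Set.self_mem_Ici) ht ht
  -- theta-sum representation of g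
  have hgrepr : ∀ t : ℝ, 0 ≤ t → g t
      = ∑ k ∈ K, (((k:ℝ) * F t k)/cb - 1 - Real.log (((k:ℝ) * F t k)/cb)) := by
    intro t ht
    have hcard : (K.card : ℝ) = I := by
      have h : I + 1 - 1 = I := by omega
      rw [hK, Nat.card_Icc, h]
    have h1 : ∀ k ∈ K, ((k:ℝ) * F t k)/cb - 1 - Real.log (((k:ℝ) * F t k)/cb)
        = ((k:ℝ) * F t k) * cb⁻¹ + (Real.log cb - 1) - Real.log ((k:ℝ) * F t k) := by
      intro k hk
      rw [Real.log_div (hupos t ht k hk).ne' hcbpos.ne']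
      ring
    rw [Finset.sum_congr rfl h1, Finset.sum_sub_distrib, Finset.sum_add_distrib,
        ← Finset.sum_mul, hmass_const t ht, Finset.sum_const, nsmul_eq_mul, hcard]
    have h2 : m * cb⁻¹ = I := by rw [hcb]; field_simp
    rw [h2]
    simp only [hgdef]
    ring
  have hG0nn : 0 ≤ G0 := by
    rw [hG0, hgrepr 0 le_rfl]
    exact Finset.sum_nonneg fun k hk =>
      theta_nonneg (div_pos (hupos 0 le_rfl k hk) hcbpos)
  -- uniform bounds on u = k F
  obtain ⟨ε, hεdef⟩ : ∃ x : ℝ, x = cb * Real.exp (-(G0+1)) := ⟨_, rfl⟩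
  have hεpos : 0 < ε := by rw [hεdef]; positivity
  have hbounds : ∀ t : ℝ, 0 ≤ t → ∀ k ∈ K, ε ≤ (k:ℝ) * F t k ∧ (k:ℝ) * F t k ≤ m := by
    intro t ht k hk
    constructor
    · set x : ℝ := ((k:ℝ) * F t k)/cb with hx
      have hxpos : 0 < x := div_pos (hupos t ht k hk) hcbpos
      have hθ : x - 1 - Real.log x ≤ g t := by
        rw [hgrepr t ht]
        exact Finset.single_le_sum
          (fun l hl => theta_nonneg (div_pos (hupos t ht l hl) hcbpos)) hk
      have hθG : x - 1 - Real.log x ≤ G0 := le_trans hθ (hgle t ht)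
      have hlog : -(G0+1) ≤ Real.log x := by nlinarith
      have hexp : Real.exp (-(G0+1)) ≤ x := by
        calc Real.exp (-(G0+1)) ≤ Real.exp (Real.log x) := Real.exp_le_exp.mpr hlog
          _ = x := Real.exp_log hxpos
      have := mul_le_mul_of_nonneg_left hexp hcbpos.le
      rw [hεdef]
      calc cb * Real.exp (-(G0+1)) ≤ cb * x := this
        _ = (k:ℝ) * F t k := by rw [hx]; field_simp
    · rw [← hmass_const t ht]
      exact Finset.single_le_sum (fun l hl => (hupos t ht l hl).le) hk
  have hFlow : ∀ t : ℝ, 0 ≤ t → ∀ l ∈ K, ε/I ≤ F t l := by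
    intro t ht l hl
    have h1 := (hbounds t ht l hl).1
    have hlI : (l:ℝ) ≤ I := by exact_mod_cast (Finset.mem_Icc.mp hl).2
    have hFpos := hpos l hl t ht
    rw [div_le_iff₀ hIcast]
    calc ε ≤ (l:ℝ) * F t l := h1
      _ = F t l * l := by ring
      _ ≤ F t l * I := mul_le_mul_of_nonneg_left hlI hFpos.le
  -- nonnegativity of dissipation terms
  have hterm_nn : ∀ t : ℝ, 0 ≤ t → ∀ b ∈ K, ∀ c ∈ K,
      (0:ℝ) ≤ (if b + c ≤ I then
          μ * (b+c : ℕ) * b * c * (F t b * F t c * F t (b+c)) *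
            ((F t (b+c))⁻¹ - (F t b)⁻¹ - (F t c)⁻¹)^2
        else 0) := by
    intro t ht b hb c hc
    split_ifs with h
    · have hb1 : (1:ℕ) ≤ b := (Finset.mem_Icc.mp hb).1
      have hc1 : (1:ℕ) ≤ c := (Finset.mem_Icc.mp hc).1
      have hfb := hpos b hb t ht
      have hfc := hpos c hc t ht
      have hfbc := hpos (b+c) (by rw [hK]; simp only [Finset.mem_Icc]; omega) t ht
      have h1 : (0:ℝ) ≤ μ * (b+c : ℕ) * b * c := by positivity
      positivity
    · exact le_rfl
  -- coercivity : D ≥ lam * g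
  obtain ⟨lam, hlam⟩ : ∃ x : ℝ, x = 2*μ*(ε/(I:ℝ))^3 * (cb*ε) / (m^4*(I:ℝ)^2) := ⟨_, rfl⟩
  have hlampos : 0 < lam := by
    rw [hlam]; positivity
  have hcoer : ∀ t : ℝ, 0 ≤ t → lam * g t ≤ D t := by
    intro t ht
    obtain ⟨S, hS⟩ : ∃ x : ℝ, x = ∑ c ∈ Finset.Icc 1 (I-1),
        ((F t (c+1))⁻¹ - (F t c)⁻¹ - (F t 1)⁻¹)^2 := ⟨_, rfl⟩
    have hSnn : 0 ≤ S := hS ▸ Finset.sum_nonneg fun c _ => sq_nonneg _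
    -- (c1) D ≥ 2 μ (ε/I)^3 S
    have hc1 : 2*μ*(ε/(I:ℝ))^3 * S ≤ D t := by
      rw [hDrepr t ht]
      have step1 : ∑ c ∈ K,
          (if 1 + c ≤ I then
            μ * (1+c : ℕ) * ((1:ℕ):ℝ) * c * (F t 1 * F t c * F t (1+c)) *
              ((F t (1+c))⁻¹ - (F t 1)⁻¹ - (F t c)⁻¹)^2
          else 0) ≤ ∑ b ∈ K, ∑ c ∈ K,
          (if b + c ≤ I then
            μ * (b+c : ℕ) * b * c * (F t b * F t c * F t (b+c)) *
              ((F t (b+c))⁻¹ - (F t b)⁻¹ - (F t c)⁻¹)^2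
          else 0) := by
        refine Finset.single_le_sum (f := fun b => ∑ c ∈ K,
          (if b + c ≤ I then
            μ * (b+c : ℕ) * b * c * (F t b * F t c * F t (b+c)) *
              ((F t (b+c))⁻¹ - (F t b)⁻¹ - (F t c)⁻¹)^2
          else 0)) (fun b hb => Finset.sum_nonneg fun c hc => hterm_nn t ht b hb c hc) h1K
      have step2 : ∑ c ∈ Finset.Icc 1 (I-1),
          (if 1 + c ≤ I then
            μ * (1+c : ℕ) * ((1:ℕ):ℝ) * c * (F t 1 * F t c * F t (1+c)) *
              ((F t (1+c))⁻¹ - (F t 1)⁻¹ - (F t c)⁻¹)^2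
          else 0) ≤ ∑ c ∈ K,
          (if 1 + c ≤ I then
            μ * (1+c : ℕ) * ((1:ℕ):ℝ) * c * (F t 1 * F t c * F t (1+c)) *
              ((F t (1+c))⁻¹ - (F t 1)⁻¹ - (F t c)⁻¹)^2
          else 0) := by
        apply Finset.sum_le_sum_of_subset_of_nonneg
        · rw [hK]; exact Finset.Icc_subset_Icc le_rfl (by omega)
        · intro c hc _
          exact hterm_nn t ht 1 h1K c hc
      have step3 : 2*μ*(ε/(I:ℝ))^3 * S ≤ ∑ c ∈ Finset.Icc 1 (I-1),
          (if 1 + c ≤ I then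
            μ * (1+c : ℕ) * ((1:ℕ):ℝ) * c * (F t 1 * F t c * F t (1+c)) *
              ((F t (1+c))⁻¹ - (F t 1)⁻¹ - (F t c)⁻¹)^2
          else 0) := by
        rw [hS, Finset.mul_sum]
        refine Finset.sum_le_sum fun c hc => ?_
        have hc' := Finset.mem_Icc.mp hc
        have hcK : c ∈ K := by rw [hK]; simp only [Finset.mem_Icc]; omega
        have hic : 1 + c ≤ I := by omega
        rw [if_pos hic]
        have hc1K : (1+c) ∈ K := by rw [hK]; simp only [Finset.mem_Icc]; omega
        have hsq : ((F t (c+1))⁻¹ - (F t c)⁻¹ - (F t 1)⁻¹)^2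
            = ((F t (1+c))⁻¹ - (F t 1)⁻¹ - (F t c)⁻¹)^2 := by
          rw [Nat.add_comm 1 c]; ring
        rw [hsq]
        have hεI : 0 < ε/(I:ℝ) := by positivity
        have hco : 2*μ ≤ μ * ((1+c : ℕ):ℝ) * ((1:ℕ):ℝ) * c := by
          have hc1 : (1:ℝ) ≤ (c:ℝ) := by exact_mod_cast hc'.1
          push_cast
          nlinarith [mul_nonneg (mul_nonneg hμ.le (sub_nonneg.mpr hc1)) (by linarith : (0:ℝ) ≤ (c:ℝ)+2)]
        have hF1 := hFlow t ht 1 h1K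
        have hFc := hFlow t ht c hcK
        have hFc1 := hFlow t ht (1+c) hc1K
        have hFs : (ε/(I:ℝ))^3 ≤ F t 1 * F t c * F t (1+c) := by
          calc (ε/(I:ℝ))^3 = (ε/(I:ℝ)) * (ε/(I:ℝ)) * (ε/(I:ℝ)) := by ring
            _ ≤ F t 1 * F t c * F t (1+c) := by
                apply mul_le_mul (mul_le_mul hF1 hFc hεI.le (le_trans hεI.le hF1))
                  hFc1 hεI.le
                exact mul_nonneg (hpos 1 h1K t ht).le (hpos c hcK t ht).le
        have hcopos : (0:ℝ) ≤ μ * ((1+c : ℕ):ℝ) * ((1:ℕ):ℝ) * c := by positivity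
        calc 2*μ*(ε/(I:ℝ))^3 * ((F t (1+c))⁻¹ - (F t 1)⁻¹ - (F t c)⁻¹)^2
            ≤ (μ * ((1+c : ℕ):ℝ) * ((1:ℕ):ℝ) * c * (F t 1 * F t c * F t (1+c))) *
              ((F t (1+c))⁻¹ - (F t 1)⁻¹ - (F t c)⁻¹)^2 := by
              apply mul_le_mul_of_nonneg_right _ (sq_nonneg _)
              calc 2*μ*(ε/(I:ℝ))^3 = (2*μ) * (ε/(I:ℝ))^3 := by ring
                _ ≤ (μ * ((1+c : ℕ):ℝ) * ((1:ℕ):ℝ) * c) * (F t 1 * F t c * F t (1+c)) :=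
                    mul_le_mul hco hFs (by positivity) hcopos
          _ = μ * ((1+c : ℕ):ℝ) * ((1:ℕ):ℝ) * c * (F t 1 * F t c * F t (1+c)) *
              ((F t (1+c))⁻¹ - (F t 1)⁻¹ - (F t c)⁻¹)^2 := by ring
      linarith
    -- (c2) variance bound
    have hc2 : ∑ k ∈ K, ((k:ℝ) * F t k - cb)^2 ≤ m^4*(I:ℝ)^2*S := by
      have h := coercive I hI (F t) ε m hεpos (fun k hk => hbounds t ht k hk)
      have hrw : (∑ l ∈ Finset.Icc 1 I, (l:ℝ) * F t l)/(I:ℝ) = cb := by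
        rw [← hK, hmass_const t ht, hcb]
      rw [hrw] at h
      rw [hK, hS]
      exact h
    -- (c3) entropy vs variance
    have hc3 : g t ≤ (∑ k ∈ K, ((k:ℝ) * F t k - cb)^2) / (cb*ε) := by
      rw [hgrepr t ht, Finset.sum_div]
      exact Finset.sum_le_sum fun k hk =>
        theta_term_bound hcbpos hεpos (hbounds t ht k hk).1
    -- combine
    have hgub : g t ≤ m^4*(I:ℝ)^2*S/(cb*ε) := by
      calc g t ≤ (∑ k ∈ K, ((k:ℝ) * F t k - cb)^2) / (cb*ε) := hc3
        _ ≤ m^4*(I:ℝ)^2*S/(cb*ε) := by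
            exact (div_le_div_iff_of_pos_right (by positivity : (0:ℝ) < cb*ε)).mpr hc2
    have hfin : lam * (m^4*(I:ℝ)^2*S/(cb*ε)) = 2*μ*(ε/(I:ℝ))^3 * S := by
      rw [hlam]
      exact comb_identity (2*μ*(ε/(I:ℝ))^3) (m^4*(I:ℝ)^2) (cb*ε) S
        (by positivity) (by positivity)
    calc lam * g t ≤ lam * (m^4*(I:ℝ)^2*S/(cb*ε)) :=
          mul_le_mul_of_nonneg_left hgub hlampos.le
      _ = 2*μ*(ε/(I:ℝ))^3 * S := hfin
      _ ≤ D t := hc1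
  -- Gronwall argument
  have hh' : ∀ t : ℝ, 0 ≤ t → HasDerivAt (fun s => g s * Real.exp (lam * s))
      (-(D t) * Real.exp (lam * t) + g t * (Real.exp (lam * t) * lam)) t := by
    intro t ht
    have h1 : HasDerivAt (fun s : ℝ => lam * s) lam t := by
      simpa using (hasDerivAt_id t).const_mul lam
    exact (hg' t ht).mul h1.exp
  have hanti2 : AntitoneOn (fun s => g s * Real.exp (lam * s)) (Set.Ici 0) := by
    apply antitoneOn_of_deriv_nonpos (convex_Ici 0)
    · exact fun x hx => ((hh' x hx).continuousAt).continuousWithinAt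
    · intro x hx; rw [interior_Ici] at hx
      exact (hh' x hx.le).differentiableAt.differentiableWithinAt
    · intro x hx; rw [interior_Ici] at hx
      rw [(hh' x hx.le).deriv]
      have hD := hcoer x hx.le
      have hexppos : 0 < Real.exp (lam * x) := Real.exp_pos _
      have hmul : Real.exp (lam * x) * (lam * g x - D x) ≤ 0 :=
        mul_nonpos_of_nonneg_of_nonpos hexppos.le (sub_nonpos.mpr hD)
      nlinarith [hmul]
  have hdecay : ∀ t : ℝ, 0 ≤ t → g t ≤ G0 * Real.exp (-(lam * t)) := by
    intro t ht
    have h1 : g t * Real.exp (lam * t) ≤ g 0 * Real.exp (lam * 0) :=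
      hanti2 Set.self_mem_Ici ht ht
    rw [mul_zero, Real.exp_zero, mul_one, ← hG0] at h1
    calc g t = g t * Real.exp (lam * t) * Real.exp (-(lam * t)) := by
          rw [mul_assoc, ← Real.exp_add]; simp
      _ ≤ G0 * Real.exp (-(lam * t)) :=
          mul_le_mul_of_nonneg_right h1 (Real.exp_pos _).le
  -- conclusion
  have hC1pos : 0 < 2*(I:ℝ)*cb*Real.sqrt G0 + cb := by
    have h1 : 0 ≤ 2*(I:ℝ)*cb*Real.sqrt G0 :=
      mul_nonneg (mul_nonneg (by positivity) hcbpos.le) (Real.sqrt_nonneg _)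
    linarith
  refine ⟨2*(I:ℝ)*cb*Real.sqrt G0 + cb, lam/2, hC1pos, half_pos hlampos, ?_⟩
  intro t ht k hk
  have hkK : k ∈ K := by rw [hK]; exact hk
  have hk1 : (1:ℕ) ≤ k := (Finset.mem_Icc.mp hk).1
  have hkr : (1:ℝ) ≤ (k:ℝ) := by exact_mod_cast hk1
  have hkpos' : (0:ℝ) < k := by linarith
  have hFpos := hpos k hkK t ht
  have hupos' := hupos t ht k hkK
  have hb := hbounds t ht k hkK
  -- rewrite the target point
  have hρk : 1/(ρ * k) = cb/k := by
    have hρm : ρ = (I:ℝ)/m := by rw [hρ, ← hm]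
    rw [hρm, hcb]
    field_simp
  rw [hρk]
  have hfeq : F t k - cb/k = ((k:ℝ) * F t k - cb)/k := by
    field_simp
  rw [hfeq]
  -- bound |u - cb|
  have hxpos : 0 < ((k:ℝ) * F t k)/cb := div_pos hupos' hcbpos
  have hxI : ((k:ℝ) * F t k)/cb ≤ (I:ℝ) := by
    rw [div_le_iff₀ hcbpos]
    have hmcb : (I:ℝ) * cb = m := by rw [hcb]; field_simp
    rw [hmcb]
    exact hb.2
  have hI1 : (1:ℝ) ≤ (I:ℝ) := by exact_mod_cast hI
  have hθx : ((k:ℝ) * F t k)/cb - 1 - Real.log (((k:ℝ) * F t k)/cb) ≤ g t := by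
    rw [hgrepr t ht]
    exact Finset.single_le_sum
      (fun l hl => theta_nonneg (div_pos (hupos t ht l hl) hcbpos)) hkK
  have hsq : (((k:ℝ) * F t k)/cb - 1)^2 ≤ 4*(I:ℝ)^2*(G0 * Real.exp (-(lam * t))) := by
    calc (((k:ℝ) * F t k)/cb - 1)^2
        ≤ 4*(I:ℝ)^2*(((k:ℝ) * F t k)/cb - 1 - Real.log (((k:ℝ) * F t k)/cb)) :=
          theta_lower hxpos hxI hI1
      _ ≤ 4*(I:ℝ)^2*(G0 * Real.exp (-(lam * t))) :=
          mul_le_mul_of_nonneg_left (le_trans hθx (hdecay t ht)) (by positivity)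
  have hE : Real.exp (-(lam * t)) = Real.exp (-(lam*t)/2) * Real.exp (-(lam*t)/2) := by
    rw [← Real.exp_add]; ring_nf
  have hRnn : 0 ≤ 2*(I:ℝ)*Real.sqrt G0 * Real.exp (-(lam*t)/2) := by positivity
  have hsq2 : (((k:ℝ) * F t k)/cb - 1)^2
      ≤ (2*(I:ℝ)*Real.sqrt G0 * Real.exp (-(lam*t)/2))^2 := by
    have hG : Real.sqrt G0 ^ 2 = G0 := Real.sq_sqrt hG0nn
    calc (((k:ℝ) * F t k)/cb - 1)^2 ≤ 4*(I:ℝ)^2*(G0 * Real.exp (-(lam * t))) := hsq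
      _ = (2*(I:ℝ)*Real.sqrt G0 * Real.exp (-(lam*t)/2))^2 := by
          have h9 : (2*(I:ℝ)*Real.sqrt G0 * Real.exp (-(lam*t)/2))^2
              = 4*(I:ℝ)^2*(Real.sqrt G0^2 *
                (Real.exp (-(lam*t)/2) * Real.exp (-(lam*t)/2))) := by ring
          rw [hE, h9, hG]
  have habs : |((k:ℝ) * F t k)/cb - 1| ≤ 2*(I:ℝ)*Real.sqrt G0 * Real.exp (-(lam*t)/2) := by
    calc |((k:ℝ) * F t k)/cb - 1| = Real.sqrt ((((k:ℝ) * F t k)/cb - 1)^2) :=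
          (Real.sqrt_sq_eq_abs _).symm
      _ ≤ Real.sqrt ((2*(I:ℝ)*Real.sqrt G0 * Real.exp (-(lam*t)/2))^2) :=
          Real.sqrt_le_sqrt hsq2
      _ = 2*(I:ℝ)*Real.sqrt G0 * Real.exp (-(lam*t)/2) := Real.sqrt_sq hRnn
  have hucb : |(k:ℝ) * F t k - cb| = cb * |((k:ℝ) * F t k)/cb - 1| := by
    have h9 : (k:ℝ) * F t k - cb = cb * (((k:ℝ) * F t k)/cb - 1) := by
      field_simp
    rw [h9, abs_mul, abs_of_pos hcbpos]
  have hdivk : |((k:ℝ) * F t k - cb)/k| ≤ |(k:ℝ) * F t k - cb| := by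
    rw [abs_div, abs_of_pos hkpos']
    exact div_le_self (abs_nonneg _) hkr
  have hexphalf : Real.exp (-(lam*t)/2) = Real.exp (-(lam/2) * t) := by
    congr 1; ring
  calc |((k:ℝ) * F t k - cb)/k| ≤ |(k:ℝ) * F t k - cb| := hdivk
    _ = cb * |((k:ℝ) * F t k)/cb - 1| := hucb
    _ ≤ cb * (2*(I:ℝ)*Real.sqrt G0 * Real.exp (-(lam*t)/2)) :=
        mul_le_mul_of_nonneg_left habs hcbpos.le
    _ ≤ (2*(I:ℝ)*cb*Real.sqrt G0 + cb) * Real.exp (-(lam/2) * t) := by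
        rw [← hexphalf]
        have hep : 0 < Real.exp (-(lam*t)/2) := Real.exp_pos _
        nlinarith [hep, hcbpos]
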